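/- Lower bound for Brill-Noether rank under wedging a loop: if Γ = Γ₁ ∧ Γ₂ with Γ₂ a loop wedged at q, and W^r_d(Γ₁) ≠ ∅, then w^r_{d+1}(Γ) ≥ w^r_d(Γ₁). -/

import Mathlib

open Finsupp

/-- The degree of a divisor: the sum of its coefficients. -/
def deg {Γ : Type*} (D : Γ →₀ ℤ) : ℤ := D.sum fun _ n => n

open Classical in
/-- The degree of the restriction of a divisor to a subset `S` of the graph. -/
noncomputable def degOn {Γ : Type*} (D : Γ →₀ ℤ) (S : Set Γ) : ℤ :=
  ∑ x ∈ D.support, if x ∈ S then D x else 0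

lemma deg_add' {Γ : Type*} (D E : Γ →₀ ℤ) : deg (D + E) = deg D + deg E := by
  unfold deg
  exact Finsupp.sum_add_index' (fun _ => rfl) (fun _ _ _ => rfl)

lemma deg_single' {Γ : Type*} (p : Γ) : deg (Finsupp.single p (1 : ℤ)) = 1 := by
  unfold deg
  exact Finsupp.sum_single_index rfl

open Classical in
lemma degOn_single_le {Γ : Type*} (D : Γ →₀ ℤ) (S : Set Γ)
    (h : ∀ x, 0 ≤ D x) (p : Γ) (hp : p ∈ D.support) (hpS : p ∈ S) :
    D p ≤ degOn D S := by
  unfold degOn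
  have := Finset.single_le_sum (f := fun x => if x ∈ S then D x else 0)
    (fun x _ => by split <;> simp [h x]) hp
  rwa [if_pos hpS] at this

open Classical in
lemma degOn_pair_le {Γ : Type*} (D : Γ →₀ ℤ) (S : Set Γ)
    (h : ∀ x, 0 ≤ D x) (p x : Γ) (hpx : p ≠ x)
    (hp : p ∈ D.support) (hpS : p ∈ S) (hx : x ∈ D.support) (hxS : x ∈ S) :
    D p + D x ≤ degOn D S := by
  unfold degOn
  have hsub : ({p, x} : Finset Γ) ⊆ D.support := by
    intro y hy
    rcases Finset.mem_insert.mp hy with h' | h'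
    · exact h' ▸ hp
    · exact (Finset.mem_singleton.mp h') ▸ hx
  have hsum := Finset.sum_le_sum_of_subset_of_nonneg
    (f := fun x => if x ∈ S then D x else 0) hsub
    (fun y _ _ => by split <;> simp [h y])
  rwa [Finset.sum_pair hpx, if_pos hpS, if_pos hxS] at hsum

/-- Lower bound for the Brill-Noether rank under wedging a loop: if
Γ = Γ₁ ∧ Γ₂ with Γ₂ a loop wedged on at the point q, and W^r_d(Γ₁) ≠ ∅, then
w^r_{d+1}(Γ) ≥ w^r_d(Γ₁).  The Brill-Noether ranks `w` and `w₁` are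
characterized as the greatest integers `k` such that every effective divisor of
degree r + k (on Γ, resp. on Γ₁) is dominated by some divisor of the relevant
degree and rank (`rankGe D r` means D has rank ≥ r on Γ; `rankGe₁ D r` means the
divisor D, supported on Γ₁, has rank ≥ r on Γ₁). -/
theorem wBN_lower_bound {Γ : Type*} (Γ₁ Γ₂ : Set Γ) (q : Γ)
    (hq₁ : q ∈ Γ₁) (hq₂ : q ∈ Γ₂)
    (hcover : Γ₁ ∪ Γ₂ = Set.univ) (hinter : Γ₁ ∩ Γ₂ = {q})
    (lineq : (Γ →₀ ℤ) → (Γ →₀ ℤ) → Prop)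
    (hequiv : Equivalence lineq)
    (hdeg : ∀ D E : Γ →₀ ℤ, lineq D E → deg D = deg E)
    (rankGe rankGe₁ : (Γ →₀ ℤ) → ℕ → Prop)  -- rank ≥ r on Γ, resp. on Γ₁
    (r d : ℕ)
    -- W^r_d(Γ₁) is nonempty:
    (hWne : ∃ D : Γ →₀ ℤ, ↑D.support ⊆ Γ₁ ∧ deg D = d ∧ rankGe₁ D r)
    -- q-reduction: every effective divisor is equivalent to an effective divisor
    -- with at most one chip on Γ₂ \ {q}:
    (hreduce : ∀ E : Γ →₀ ℤ, 0 ≤ E → ∃ E' : Γ →₀ ℤ, 0 ≤ E' ∧ lineq E E' ∧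
      degOn E' (Γ₂ \ {q}) ≤ 1)
    -- adding a point of Γ₂ to a divisor of rank ≥ r on Γ₁ yields rank ≥ r on Γ:
    (hwedge : ∀ D : Γ →₀ ℤ, ↑D.support ⊆ Γ₁ → rankGe₁ D r → ∀ p ∈ Γ₂,
      rankGe (D + Finsupp.single p 1) r)
    -- linear equivalence preserves the property of being dominated by a divisor
    -- of degree d+1 and rank ≥ r:
    (hdom : ∀ E E' : Γ →₀ ℤ, lineq E E' →
      (∃ D : Γ →₀ ℤ, deg D = (d : ℤ) + 1 ∧ rankGe D r ∧ E' ≤ D) →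
      (∃ D : Γ →₀ ℤ, deg D = (d : ℤ) + 1 ∧ rankGe D r ∧ E ≤ D))
    (w w₁ : ℤ)
    -- w₁ = w^r_d(Γ₁):
    (hw₁ : IsGreatest {k : ℤ | ∀ E : Γ →₀ ℤ, 0 ≤ E → ↑E.support ⊆ Γ₁ →
      deg E = r + k → ∃ D : Γ →₀ ℤ, ↑D.support ⊆ Γ₁ ∧ deg D = d ∧
        rankGe₁ D r ∧ E ≤ D} w₁)
    -- w = w^r_{d+1}(Γ):
    (hw : IsGreatest {k : ℤ | ∀ E : Γ →₀ ℤ, 0 ≤ E → deg E = r + k →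
      ∃ D : Γ →₀ ℤ, deg D = (d : ℤ) + 1 ∧ rankGe D r ∧ E ≤ D} w) :
    w₁ ≤ w := by
  classical
  apply hw.2
  intro E hE hEdeg
  obtain ⟨E', hE'pos, hlin, hE'on⟩ := hreduce E hE
  apply hdom E E' hlin
  have hdegE' : deg E' = r + w₁ := by rw [← hdeg E E' hlin, hEdeg]
  have hnn : ∀ x : Γ, 0 ≤ E' x := fun x => Finsupp.le_def.mp hE'pos x
  have hΓ₂ : ∀ x : Γ, x ∉ Γ₁ → x ∈ Γ₂ \ {q} := by
    intro x hx
    have hx2 : x ∈ Γ₁ ∪ Γ₂ := by rw [hcover]; trivial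
    rcases hx2 with h | h
    · exact absurd h hx
    · refine ⟨h, ?_⟩
      intro hxq
      exact hx (by rw [Set.mem_singleton_iff.mp hxq]; exact hq₁)
  by_cases hp : ∃ p ∈ E'.support, p ∈ Γ₂ \ {q}
  · obtain ⟨p, hpsupp, hpΓ⟩ := hp
    have hple : E' p ≤ 1 :=
      (degOn_single_le E' _ hnn p hpsupp hpΓ).trans hE'on
    have hpge : 1 ≤ E' p := by
      have := hnn p
      have hne : E' p ≠ 0 := Finsupp.mem_support_iff.mp hpsupp
      omega
    have hpone : E' p = 1 := le_antisymm hple hpge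
    have huniq : ∀ x ∈ E'.support, x ∈ Γ₂ \ {q} → x = p := by
      intro x hxsupp hxΓ
      by_contra hxp
      have hsum := degOn_pair_le E' _ hnn p x (Ne.symm hxp) hpsupp hpΓ hxsupp hxΓ
      have hxge : 1 ≤ E' x := by
        have := hnn x
        have hne : E' x ≠ 0 := Finsupp.mem_support_iff.mp hxsupp
        omega
      have := hsum.trans hE'on
      omega
    set F : Γ →₀ ℤ := E' - Finsupp.single p 1 with hF
    have hE'eq : E' = F + Finsupp.single p 1 := by
      rw [hF]; abel
    have hFpos : 0 ≤ F := by
      rw [Finsupp.le_def]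
      intro x
      rw [hF, Finsupp.sub_apply, Finsupp.single_apply]
      by_cases hxp : p = x
      · subst hxp; simp [hpone]
      · simp only [if_neg hxp, sub_zero]
        exact hnn x
    have hFsupp : ↑F.support ⊆ Γ₁ := by
      intro x hx
      by_contra hxΓ
      have hx2 := hΓ₂ x hxΓ
      have hFx : F x ≠ 0 := Finsupp.mem_support_iff.mp hx
      have hxp : x ≠ p := by
        intro h
        subst h
        rw [hF, Finsupp.sub_apply, Finsupp.single_apply, if_pos rfl, hpone] at hFx
        simp at hFx
      have hE'x : E' x ≠ 0 := by
        rw [hF, Finsupp.sub_apply, Finsupp.single_apply, if_neg (Ne.symm hxp),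
          sub_zero] at hFx
        exact hFx
      exact hxp (huniq x (Finsupp.mem_support_iff.mpr hE'x) hx2)
    set G : Γ →₀ ℤ := F + Finsupp.single q 1 with hG
    have hGpos : 0 ≤ G :=
      le_trans hFpos (le_add_of_nonneg_right (Finsupp.single_nonneg.mpr zero_le_one))
    have hGsupp : ↑G.support ⊆ Γ₁ := by
      intro x hx
      have := Finsupp.support_add (g₁ := F) (g₂ := Finsupp.single q 1) hx
      rcases Finset.mem_union.mp this with h | h
      · exact hFsupp h
      · have := Finsupp.support_single_subset h
        rw [Finset.mem_singleton.mp this]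
        exact hq₁
    have hGdeg : deg G = r + w₁ := by
      have h1 : deg E' = deg F + 1 := by rw [hE'eq, deg_add', deg_single']
      rw [hG, deg_add', deg_single']
      omega
    obtain ⟨D₁, hD₁supp, hD₁deg, hD₁rank, hle⟩ := hw₁.1 G hGpos hGsupp hGdeg
    refine ⟨D₁ + Finsupp.single p 1, ?_, hwedge D₁ hD₁supp hD₁rank p hpΓ.1, ?_⟩
    · rw [deg_add', hD₁deg, deg_single']
    · have hFle : F ≤ D₁ :=
        le_trans (le_add_of_nonneg_right (Finsupp.single_nonneg.mpr zero_le_one)) hle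
      rw [hE'eq]
      exact add_le_add hFle le_rfl
  · push_neg at hp
    have hsupp : ↑E'.support ⊆ Γ₁ := by
      intro x hx
      by_contra hxΓ
      exact hp x hx (hΓ₂ x hxΓ)
    obtain ⟨D₁, hD₁supp, hD₁deg, hD₁rank, hle⟩ := hw₁.1 E' hE'pos hsupp hdegE'
    refine ⟨D₁ + Finsupp.single q 1, ?_, hwedge D₁ hD₁supp hD₁rank q hq₂, ?_⟩
    · rw [deg_add', hD₁deg, deg_single']
    · exact le_trans hle (le_add_of_nonneg_right (Finsupp.single_nonneg.mpr zero_le_one))
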